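/- Let 0<q<1 and let g(x) = Σ_{k≥0} a_k x^k for real 0 ≤ x < 1/q. Then as x → 1/q from the left, (1−qx)^2 g(x) converges to ∏_{k=0}^∞ ((1−q^{2k+1})/(1−q^{2k+2}))^2. -/

import Mathlib

open Finset Filter Real Set Topology

namespace Stmt6Aux

noncomputable def r (q : ℝ) (k : ℕ) : ℝ := (1 - q ^ (2*k+1)) / (1 - q ^ (2*k+2))

noncomputable def cc (q : ℝ) (n : ℕ) : ℝ := ∏ i ∈ Finset.range n, r q i

noncomputable def S (q : ℝ) (m : ℕ) : ℝ := ∑ i ∈ Finset.range (m+1), cc q i * cc q (m - i)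

variable {q : ℝ}

lemma one_sub_pow_pos (hq0 : 0 < q) (hq1 : q < 1) (n : ℕ) (hn : n ≠ 0) : 0 < 1 - q ^ n := by
  have : q ^ n < 1 := pow_lt_one₀ hq0.le hq1 hn
  linarith

lemma r_pos (hq0 : 0 < q) (hq1 : q < 1) (k : ℕ) : 0 < r q k :=
  div_pos (one_sub_pow_pos hq0 hq1 _ (by omega)) (one_sub_pow_pos hq0 hq1 _ (by omega))

lemma r_le_one (hq0 : 0 < q) (hq1 : q < 1) (k : ℕ) : r q k ≤ 1 := by
  rw [r, div_le_one (one_sub_pow_pos hq0 hq1 _ (by omega))]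
  have : q ^ (2*k+2) ≤ q ^ (2*k+1) := pow_le_pow_of_le_one hq0.le hq1.le (by omega)
  linarith

lemma cc_zero : cc q 0 = 1 := by simp [cc]

lemma cc_succ (n : ℕ) : cc q (n+1) = cc q n * r q n := Finset.prod_range_succ _ _

lemma cc_pos (hq0 : 0 < q) (hq1 : q < 1) (n : ℕ) : 0 < cc q n :=
  Finset.prod_pos fun i _ => r_pos hq0 hq1 i

lemma cc_le_one (hq0 : 0 < q) (hq1 : q < 1) (n : ℕ) : cc q n ≤ 1 :=
  Finset.prod_le_one (fun i _ => (r_pos hq0 hq1 i).le) (fun i _ => r_le_one hq0 hq1 i)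

lemma cc_anti (hq0 : 0 < q) (hq1 : q < 1) : Antitone (cc q) := by
  refine antitone_nat_of_succ_le fun n => ?_
  rw [cc_succ]
  nlinarith [cc_pos hq0 hq1 n, r_le_one hq0 hq1 n, r_pos hq0 hq1 n]

lemma cc_rec' (hq0 : 0 < q) (hq1 : q < 1) (n : ℕ) :
    (1 - q ^ (2*n+2)) * cc q (n+1) = (1 - q ^ (2*n+1)) * cc q n := by
  have h : (1 - q^(2*n+2)) ≠ 0 := (one_sub_pow_pos hq0 hq1 _ (by omega)).ne'
  rw [cc_succ, r]
  field_simp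

lemma one_sub_r_le (hq0 : 0 < q) (hq1 : q < 1) (n : ℕ) : 1 - r q n ≤ q ^ (2*n) := by
  have hd : 0 < 1 - q^(2*n+2) := one_sub_pow_pos hq0 hq1 _ (by omega)
  have hq2 : 0 < 1 - q^2 := one_sub_pow_pos hq0 hq1 2 (by omega)
  have h2 : 1 - r q n = q^(2*n+1) * (1 - q) / (1 - q^(2*n+2)) := by
    rw [r]
    field_simp
    ring
  have hd2 : 1 - q^2 ≤ 1 - q^(2*n+2) := by
    have : q ^ (2*n+2) ≤ q ^ 2 := pow_le_pow_of_le_one hq0.le hq1.le (by omega)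
    linarith
  rw [h2, div_le_iff₀ hd]
  have hpn := pow_nonneg hq0.le (2*n)
  have h4 : q * (1-q) ≤ 1 - q^2 := by nlinarith
  have h5 : q^(2*n+1) * (1-q) ≤ q^(2*n) * (1 - q^2) := by
    rw [pow_succ]; nlinarith
  calc q^(2*n+1) * (1-q) ≤ q^(2*n) * (1-q^2) := h5
    _ ≤ q^(2*n) * (1 - q^(2*n+2)) := mul_le_mul_of_nonneg_left hd2 hpn

lemma cc_diff_le (hq0 : 0 < q) (hq1 : q < 1) (n : ℕ) : cc q n - cc q (n+1) ≤ q ^ (2*n) := by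
  have h1 : cc q n - cc q (n+1) = cc q n * (1 - r q n) := by rw [cc_succ]; ring
  have h3 := one_sub_r_le hq0 hq1 n
  have hc1 : 0 < cc q n := cc_pos hq0 hq1 n
  have hc2 : cc q n ≤ 1 := cc_le_one hq0 hq1 n
  have hr1 : 0 ≤ 1 - r q n := by have := r_le_one hq0 hq1 n; linarith
  calc cc q n - cc q (n+1) = cc q n * (1 - r q n) := h1
    _ ≤ 1 * (1 - r q n) := by nlinarith
    _ ≤ q ^ (2*n) := by linarith

lemma r_ge_half (hq0 : 0 < q) (hq1 : q < 1) (k : ℕ) : (1:ℝ)/2 ≤ r q k := by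
  have hd : 0 < 1 - q^(2*k+2) := one_sub_pow_pos hq0 hq1 _ (by omega)
  rw [r, le_div_iff₀ hd]
  have h1 : q^(2*k+1) ≤ q := by
    calc q^(2*k+1) ≤ q^1 := pow_le_pow_of_le_one hq0.le hq1.le (by omega)
      _ = q := pow_one q
  have h2 : q^(2*k+2) = q^(2*k+1) * q := by rw [pow_succ]
  nlinarith [pow_nonneg hq0.le (2*k+1)]

lemma hA (hq0 : 0 < q) (hq1 : q < 1) (k : ℕ) :
    (1 - q^(2*k+4)) * S q (k+2)
      = ∑ i ∈ Finset.range (k+2),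
          ((1 - q^(2*i+1)) * (1 + q^(2*(k+1-i)))) * (cc q i * cc q (k+1-i)) := by
  rw [S, Finset.mul_sum]
  have e1 : ∀ i ∈ Finset.range (k+3), (1 - q^(2*k+4)) * (cc q i * cc q (k+2-i))
      = (1 - q^(2*i)) * cc q i * cc q (k+2-i)
        + q^(2*i) * cc q i * ((1 - q^(2*(k+2-i))) * cc q (k+2-i)) := by
    intro i hi
    have hi' : i ≤ k+2 := by have := Finset.mem_range.mp hi; omega
    have hpq : q^(2*i) * q^(2*(k+2-i)) = q^(2*k+4) := by
      rw [← pow_add]; congr 1; omega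
    rw [← hpq]; ring
  rw [show k+2+1 = k+3 from rfl, Finset.sum_congr rfl e1, Finset.sum_add_distrib]
  have hT1 : ∑ i ∈ Finset.range (k+3), (1 - q^(2*i)) * cc q i * cc q (k+2-i)
      = ∑ i ∈ Finset.range (k+2), (1 - q^(2*i+1)) * cc q i * cc q (k+1-i) := by
    rw [show k+3 = (k+2)+1 from rfl,
      Finset.sum_range_succ' (fun i => (1 - q^(2*i)) * cc q i * cc q (k+2-i)) (k+2)]
    simp only [Nat.mul_zero, pow_zero, sub_self, zero_mul, add_zero]
    refine Finset.sum_congr rfl fun i hi => ?_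
    have hi' : i ≤ k+1 := by have := Finset.mem_range.mp hi; omega
    have h1 : 2*(i+1) = 2*i+2 := by ring
    have h2 : k+2-(i+1) = k+1-i := by omega
    rw [h1, h2, cc_rec' hq0 hq1 i]
  have hT2 : ∑ i ∈ Finset.range (k+3), q^(2*i) * cc q i * ((1 - q^(2*(k+2-i))) * cc q (k+2-i))
      = ∑ i ∈ Finset.range (k+2),
          (q^(2*(k+1-i)) * (1 - q^(2*i+1))) * (cc q i * cc q (k+1-i)) := by
    rw [show k+3 = (k+2)+1 from rfl, Finset.sum_range_succ]
    simp only [Nat.sub_self, Nat.mul_zero, pow_zero, sub_self, zero_mul, mul_zero, add_zero]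
    have step : ∀ i ∈ Finset.range (k+2), q^(2*i) * cc q i * ((1 - q^(2*(k+2-i))) * cc q (k+2-i))
        = q^(2*i) * cc q i * ((1 - q^(2*(k+1-i)+1)) * cc q (k+1-i)) := by
      intro i hi
      have hi' : i ≤ k+1 := by have := Finset.mem_range.mp hi; omega
      have h1 : 2*(k+2-i) = 2*(k+1-i)+2 := by omega
      have h2 : k+2-i = (k+1-i)+1 := by omega
      rw [h1, h2, cc_rec' hq0 hq1 (k+1-i)]
    rw [Finset.sum_congr rfl step,
      ← Finset.sum_range_reflect
        (fun i => q^(2*i) * cc q i * ((1 - q^(2*(k+1-i)+1)) * cc q (k+1-i))) (k+2)]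
    refine Finset.sum_congr rfl fun j hj => ?_
    have hj' : j ≤ k+1 := by have := Finset.mem_range.mp hj; omega
    have h1 : k+2-1-j = k+1-j := by omega
    have h2 : k+1-(k+1-j) = j := by omega
    rw [h1, h2]
    ring
  rw [hT1, hT2, ← Finset.sum_add_distrib]
  refine Finset.sum_congr rfl fun i hi => ?_
  ring

lemma hB (hq0 : 0 < q) (hq1 : q < 1) (k : ℕ) :
    (1 - q^(2*k+2)) * S q k
      = ∑ i ∈ Finset.range (k+2),
          ((1 + q^(2*i+1)) * (1 - q^(2*(k+1-i)))) * (cc q i * cc q (k+1-i)) := by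
  rw [S, Finset.mul_sum]
  have e2 : ∀ i ∈ Finset.range (k+1), (1 - q^(2*k+2)) * (cc q i * cc q (k-i))
      = (1 - q^(2*i+1)) * cc q i * cc q (k-i)
        + q^(2*i+1) * cc q i * ((1 - q^(2*(k-i)+1)) * cc q (k-i)) := by
    intro i hi
    have hi' : i ≤ k := by have := Finset.mem_range.mp hi; omega
    have hpq : q^(2*i+1) * q^(2*(k-i)+1) = q^(2*k+2) := by
      rw [← pow_add]; congr 1; omega
    rw [← hpq]; ring
  rw [Finset.sum_congr rfl e2, Finset.sum_add_distrib]
  have hU1 : ∑ i ∈ Finset.range (k+1), (1 - q^(2*i+1)) * cc q i * cc q (k-i)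
      = ∑ j ∈ Finset.range (k+1), ((1 - q^(2*(k+1-j))) * cc q (k+1-j)) * cc q j := by
    rw [← Finset.sum_range_reflect (fun i => (1 - q^(2*i+1)) * cc q i * cc q (k-i)) (k+1)]
    refine Finset.sum_congr rfl fun j hj => ?_
    have hj' : j ≤ k := by have := Finset.mem_range.mp hj; omega
    have h1 : k+1-1-j = k-j := by omega
    have h2 : k-(k-j) = j := by omega
    have h3 : 2*(k-j)+2 = 2*(k+1-j) := by omega
    have h4 : (k-j)+1 = k+1-j := by omega
    rw [h1, h2, ← cc_rec' hq0 hq1 (k-j), h3, h4]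
  have hU2 : ∑ i ∈ Finset.range (k+1), q^(2*i+1) * cc q i * ((1 - q^(2*(k-i)+1)) * cc q (k-i))
      = ∑ i ∈ Finset.range (k+1), q^(2*i+1) * cc q i * ((1 - q^(2*(k+1-i))) * cc q (k+1-i)) := by
    refine Finset.sum_congr rfl fun i hi => ?_
    have hi' : i ≤ k := by have := Finset.mem_range.mp hi; omega
    have h3 : 2*(k-i)+2 = 2*(k+1-i) := by omega
    have h4 : (k-i)+1 = k+1-i := by omega
    rw [← cc_rec' hq0 hq1 (k-i), h3, h4]
  rw [hU1, hU2, ← Finset.sum_add_distrib]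
  rw [Finset.sum_range_succ (fun i =>
      ((1 + q^(2*i+1)) * (1 - q^(2*(k+1-i)))) * (cc q i * cc q (k+1-i))) (k+1)]
  simp only [Nat.sub_self, Nat.mul_zero, pow_zero, sub_self, mul_zero, zero_mul, add_zero]
  refine Finset.sum_congr rfl fun i hi => ?_
  ring

lemma ID (hq0 : 0 < q) (hq1 : q < 1) (k : ℕ) :
    (1 - q^(2*k+4)) * S q (k+2) + (1 - q^(2*k+2)) * S q k
      = 2*(1 - q^(2*k+3)) * S q (k+1) := by
  rw [hA hq0 hq1 k, hB hq0 hq1 k, ← Finset.sum_add_distrib, S, Finset.mul_sum]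
  refine Finset.sum_congr rfl fun i hi => ?_
  have hi' : i ≤ k+1 := by have := Finset.mem_range.mp hi; omega
  have hpq : q^(2*i+1) * q^(2*(k+1-i)) = q^(2*k+3) := by
    rw [← pow_add]; congr 1; omega
  rw [← hpq]; ring

end Stmt6Aux

open Stmt6Aux

theorem stmt6 (q : ℝ) (hq0 : 0 < q) (hq1 : q < 1) (a : ℕ → ℝ)
    (ha0 : a 0 = 1)
    (ha1 : 2 * (1 - q) * a 0 = q⁻¹ * (1 - q ^ 2) * a 1)
    (ha : ∀ k : ℕ, 1 ≤ k →
      2 * (1 - q ^ (2 * k + 1)) * a k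
        = q⁻¹ * (1 - q ^ (2 * k + 2)) * a (k + 1) + q * (1 - q ^ (2 * k)) * a (k - 1)) :
    Multipliable (fun k : ℕ => ((1 - q ^ (2 * k + 1)) / (1 - q ^ (2 * k + 2))) ^ 2) ∧
      Filter.Tendsto (fun x : ℝ => (1 - q * x) ^ 2 * ∑' k : ℕ, a k * x ^ k)
        (nhdsWithin (1 / q) (Set.Ico 0 (1 / q)))
        (nhds (∏' k : ℕ, ((1 - q ^ (2 * k + 1)) / (1 - q ^ (2 * k + 2))) ^ 2)) := by
  have hqne : q ≠ 0 := hq0.ne'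
  have hq2 : 0 < 1 - q^2 := one_sub_pow_pos hq0 hq1 2 (by omega)
  have hq2lt : q^2 < 1 := by nlinarith
  have hq2nn : (0:ℝ) ≤ q^2 := sq_nonneg q
  -- Step 1 : a k = q^k * S q k
  have key : ∀ k, a k = q^k * S q k := by
    have base0 : a 0 = q^0 * S q 0 := by
      simp [ha0, S, cc_zero]
    have base1 : a 1 = q^1 * S q 1 := by
      rw [ha0] at ha1
      have hS1 : S q 1 = 2 * ((1 - q^1)/(1 - q^2)) := by
        simp [S, Finset.sum_range_succ, cc_zero, cc_succ, r]
        ring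
      have h1 : a 1 = 2*(1-q)*q/(1-q^2) := by
        field_simp at ha1
        field_simp
        linarith [ha1]
      rw [h1, hS1]
      field_simp
    have step : ∀ k, a k = q^k * S q k → a (k+1) = q^(k+1) * S q (k+1) →
        a (k+2) = q^(k+2) * S q (k+2) := by
      intro k hk hk1
      have hrec := ha (k+1) (by omega)
      rw [show 2*(k+1)+1 = 2*k+3 by ring, show 2*(k+1)+2 = 2*k+4 by ring,
        show 2*(k+1) = 2*k+2 by ring, Nat.add_sub_cancel] at hrec
      have hne : (1 - q^(2*k+4)) ≠ 0 := (one_sub_pow_pos hq0 hq1 _ (by omega)).ne'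
      refine mul_left_cancel₀ hne ?_
      have h5 : (1 - q^(2*k+4)) * a (k+2)
          = q * (2*(1 - q^(2*k+3)) * a (k+1)) - q^2 * (1 - q^(2*k+2)) * a k := by
        rw [hrec]
        field_simp
        ring
      rw [h5, hk, hk1]
      linear_combination (-(q^(k+2))) * (ID hq0 hq1 k)
    intro k
    induction k using Nat.twoStepInduction with
    | zero => exact base0
    | one => exact base1
    | more n ih1 ih2 => exact step n ih1 ih2
  -- limit L of cc
  have hbdd : BddBelow (Set.range (cc q)) := by
    refine ⟨0, ?_⟩
    rintro x ⟨n, rfl⟩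
    exact (cc_pos hq0 hq1 n).le
  set L : ℝ := ⨅ n, cc q n with hLdef
  have hL : Tendsto (cc q) atTop (𝓝 L) := tendsto_atTop_ciInf (cc_anti hq0 hq1) hbdd
  have hL_le : ∀ n, L ≤ cc q n := fun n =>
    le_of_tendsto hL (eventually_atTop.2 ⟨n, fun m hm => cc_anti hq0 hq1 hm⟩)
  have hL_nonneg : 0 ≤ L :=
    ge_of_tendsto hL (Filter.Eventually.of_forall fun n => (cc_pos hq0 hq1 n).le)
  -- eps bound
  have eps_le : ∀ n, cc q n - L ≤ (q^2)^n * (1 - q^2)⁻¹ := by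
    intro n
    have hj : ∀ j, cc q n - cc q (n+j) ≤ (q^2)^n * (1 - q^2)⁻¹ := by
      intro j
      have tele : ∑ i ∈ Finset.range j, (cc q (n+i) - cc q (n+i+1)) = cc q n - cc q (n+j) := by
        simpa [add_assoc] using Finset.sum_range_sub' (fun i => cc q (n+i)) j
      have hterm : ∀ i ∈ Finset.range j, cc q (n+i) - cc q (n+i+1) ≤ (q^2)^n * (q^2)^i := by
        intro i _
        calc cc q (n+i) - cc q (n+i+1) ≤ q^(2*(n+i)) := cc_diff_le hq0 hq1 (n+i)
          _ = (q^2)^n * (q^2)^i := by rw [← pow_add, ← pow_mul]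
      calc cc q n - cc q (n+j) = ∑ i ∈ Finset.range j, (cc q (n+i) - cc q (n+i+1)) := tele.symm
        _ ≤ ∑ i ∈ Finset.range j, (q^2)^n * (q^2)^i := Finset.sum_le_sum hterm
        _ = (q^2)^n * ∑ i ∈ Finset.range j, (q^2)^i := by rw [Finset.mul_sum]
        _ ≤ (q^2)^n * ∑' i : ℕ, (q^2)^i := by
            refine mul_le_mul_of_nonneg_left ?_ (pow_nonneg hq2nn n)
            exact Summable.sum_le_tsum _ (fun i _ => pow_nonneg hq2nn i)
              (summable_geometric_of_lt_one hq2nn hq2lt)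
        _ = (q^2)^n * (1 - q^2)⁻¹ := by rw [tsum_geometric_of_lt_one hq2nn hq2lt]
    have htt : Tendsto (fun j => cc q n - cc q (n+j)) atTop (𝓝 (cc q n - L)) := by
      refine tendsto_const_nhds.sub ?_
      have := hL.comp (Filter.tendsto_add_atTop_nat n)
      refine this.congr fun j => ?_
      simp [Function.comp, add_comm]
    exact le_of_tendsto htt (Filter.Eventually.of_forall hj)
  have heps_nonneg : ∀ n, 0 ≤ cc q n - L := fun n => sub_nonneg.2 (hL_le n)
  have heps_summ : Summable (fun n => cc q n - L) := by
    refine Summable.of_nonneg_of_le heps_nonneg eps_le ?_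
    exact (summable_geometric_of_lt_one hq2nn hq2lt).mul_right _
  -- summability of cc * y^n
  have hsy : ∀ y : ℝ, 0 ≤ y → y < 1 → Summable (fun n => ‖cc q n * y^n‖) := by
    intro y hy0 hy1
    refine Summable.of_nonneg_of_le (fun n => norm_nonneg _) (fun n => ?_)
      (summable_geometric_of_lt_one hy0 hy1)
    rw [Real.norm_eq_abs, abs_of_nonneg (mul_nonneg (cc_pos hq0 hq1 n).le (pow_nonneg hy0 n))]
    have := cc_le_one hq0 hq1 n
    have hyn := pow_nonneg hy0 n
    nlinarith [cc_pos hq0 hq1 n]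
  -- Cauchy product
  have hcauchy : ∀ y : ℝ, 0 ≤ y → y < 1 →
      (∑' k : ℕ, S q k * y^k) = (∑' n : ℕ, cc q n * y^n)^2 := by
    intro y hy0 hy1
    have hC := tsum_mul_tsum_eq_tsum_sum_antidiagonal_of_summable_norm
      (hsy y hy0 hy1) (hsy y hy0 hy1)
    rw [sq, hC]
    refine tsum_congr fun k => ?_
    rw [Finset.Nat.sum_antidiagonal_eq_sum_range_succ_mk, S, Finset.sum_mul]
    refine (Finset.sum_congr rfl fun i hi => ?_).symm
    have hi' : i ≤ k := by have := Finset.mem_range.mp hi; omega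
    have hyy : y^i * y^(k-i) = y^k := by rw [← pow_add]; congr 1; omega
    calc (cc q i * y^i) * (cc q (k-i) * y^(k-i))
        = cc q i * cc q (k-i) * (y^i * y^(k-i)) := by ring
      _ = cc q i * cc q (k-i) * y^k := by rw [hyy]
  -- key limit lemma
  have hE_eq : ∀ᶠ y in nhdsWithin 1 (Set.Ico (0:ℝ) 1),
      (1-y) * (∑' n : ℕ, cc q n * y^n) = L + (1-y) * ∑' n : ℕ, (cc q n - L) * y^n := by
    refine Filter.eventually_of_mem self_mem_nhdsWithin fun y hy => ?_
    obtain ⟨hy0, hy1⟩ := hy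
    have h1y : (1:ℝ) - y ≠ 0 := by intro h; linarith
    have hLy : Summable (fun n : ℕ => L * y^n) :=
      (summable_geometric_of_lt_one hy0 hy1).mul_left L
    have heps_y : Summable (fun n : ℕ => (cc q n - L) * y^n) := by
      refine Summable.of_nonneg_of_le
        (fun n => mul_nonneg (heps_nonneg n) (pow_nonneg hy0 n)) (fun n => ?_) heps_summ
      have := pow_le_one₀ hy0 hy1.le (n := n)
      nlinarith [heps_nonneg n]
    have hdecomp : (∑' n : ℕ, cc q n * y^n)
        = L * (1-y)⁻¹ + ∑' n : ℕ, (cc q n - L) * y^n := by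
      have hptw : ∀ n : ℕ, cc q n * y^n = L * y^n + (cc q n - L) * y^n := fun n => by ring
      rw [tsum_congr hptw, Summable.tsum_add hLy heps_y, tsum_mul_left,
        tsum_geometric_of_lt_one hy0 hy1]
    rw [hdecomp]
    field_simp
  have hEbound : Tendsto (fun y : ℝ => (1-y) * ∑' n : ℕ, (cc q n - L) * y^n)
      (nhdsWithin 1 (Set.Ico (0:ℝ) 1)) (𝓝 0) := by
    set T : ℝ := ∑' n : ℕ, (cc q n - L) with hT
    refine squeeze_zero' (g := fun y : ℝ => (1-y)*T) ?_ ?_ ?_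
    · refine Filter.eventually_of_mem self_mem_nhdsWithin fun y hy => ?_
      obtain ⟨hy0, hy1⟩ := hy
      have hEnn : 0 ≤ ∑' n : ℕ, (cc q n - L) * y^n :=
        tsum_nonneg fun n => mul_nonneg (heps_nonneg n) (pow_nonneg hy0 n)
      have : (0:ℝ) ≤ 1 - y := by linarith
      positivity
    · refine Filter.eventually_of_mem self_mem_nhdsWithin fun y hy => ?_
      obtain ⟨hy0, hy1⟩ := hy
      have heps_y : Summable (fun n : ℕ => (cc q n - L) * y^n) := by
        refine Summable.of_nonneg_of_le
          (fun n => mul_nonneg (heps_nonneg n) (pow_nonneg hy0 n)) (fun n => ?_) heps_summ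
        have := pow_le_one₀ hy0 hy1.le (n := n)
        nlinarith [heps_nonneg n]
      have hle : (∑' n : ℕ, (cc q n - L) * y^n) ≤ T := by
        refine Summable.tsum_le_tsum (fun n => ?_) heps_y heps_summ
        have := pow_le_one₀ hy0 hy1.le (n := n)
        nlinarith [heps_nonneg n]
      have h1y : (0:ℝ) ≤ 1 - y := by linarith
      exact mul_le_mul_of_nonneg_left hle h1y
    · have hcont : Tendsto (fun y : ℝ => (1-y) * T) (𝓝 1) (𝓝 ((1-1)*T)) :=
        ((continuous_const.sub continuous_id).mul continuous_const).tendsto 1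
      simpa using hcont.mono_left nhdsWithin_le_nhds
  have hlim : Tendsto (fun y : ℝ => (1-y) * ∑' n : ℕ, cc q n * y^n)
      (nhdsWithin 1 (Set.Ico (0:ℝ) 1)) (𝓝 L) := by
    have : Tendsto (fun y : ℝ => L + (1-y) * ∑' n : ℕ, (cc q n - L) * y^n)
        (nhdsWithin 1 (Set.Ico (0:ℝ) 1)) (𝓝 (L + 0)) :=
      tendsto_const_nhds.add hEbound
    rw [add_zero] at this
    exact Filter.Tendsto.congr' (Filter.EventuallyEq.symm hE_eq) this
  -- Multipliable and tprod value
  have hrsq_pos : ∀ k, 0 < r q k ^ 2 := fun k => pow_pos (r_pos hq0 hq1 k) 2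
  have hsumt : Summable (fun k => Real.log (r q k ^ 2)) := by
    rw [← summable_abs_iff]
    refine Summable.of_nonneg_of_le (fun k => abs_nonneg _) (fun k => ?_)
      (((summable_geometric_of_lt_one hq2nn hq2lt).mul_left 4))
    have hrp := r_pos hq0 hq1 k
    have hr1 := r_le_one hq0 hq1 k
    have hrh := r_ge_half hq0 hq1 k
    have hlog : Real.log (r q k ^ 2) = 2 * Real.log (r q k) := by
      rw [sq, Real.log_mul hrp.ne' hrp.ne']; ring
    have hlogle : Real.log (r q k) ≤ 0 := Real.log_nonpos hrp.le hr1
    have hlb : -Real.log (r q k) ≤ (1 - r q k) / r q k := by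
      have := Real.log_le_sub_one_of_pos (inv_pos.2 hrp)
      rw [Real.log_inv] at this
      have : -Real.log (r q k) ≤ (r q k)⁻¹ - 1 := by linarith
      calc -Real.log (r q k) ≤ (r q k)⁻¹ - 1 := this
        _ = (1 - r q k) / r q k := by field_simp
    have hdb : (1 - r q k)/ r q k ≤ 2 * (1 - r q k) := by
      rw [div_le_iff₀ hrp]
      have h1 := one_sub_r_le hq0 hq1 k
      nlinarith [pow_nonneg hq0.le (2*k)]
    have habs : |Real.log (r q k ^ 2)| = -(2 * Real.log (r q k)) := by
      rw [hlog, abs_of_nonpos (by linarith)]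
    rw [habs]
    have h1 := one_sub_r_le hq0 hq1 k
    have hq2k : q^(2*k) = (q^2)^k := by rw [← pow_mul]
    rw [hq2k] at h1
    nlinarith
  have hprod : HasProd (fun k => r q k ^ 2) (Real.exp (∑' k, Real.log (r q k ^ 2))) := by
    have h := hsumt.hasSum.rexp
    have h2 : (Real.exp ∘ fun k => Real.log (r q k ^ 2)) = fun k => r q k ^ 2 :=
      funext fun k => Real.exp_log (hrsq_pos k)
    rwa [h2] at h
  have hmult : Multipliable (fun k => r q k ^ 2) := hprod.multipliable
  have hccsq : ∀ n, ∏ i ∈ Finset.range n, r q i ^ 2 = (cc q n)^2 := fun n => by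
    rw [cc, ← Finset.prod_pow]
  have hcc2 : Tendsto (fun n => (cc q n)^2) atTop (𝓝 (L^2)) := hL.pow 2
  have hexp_eq : Real.exp (∑' k, Real.log (r q k ^ 2)) = L^2 :=
    tendsto_nhds_unique (hprod.tendsto_prod_nat.congr hccsq) hcc2
  have htprod : (∏' k, r q k ^ 2) = L^2 := by rw [hprod.tprod_eq, hexp_eq]
  constructor
  · exact hmult
  · rw [show (∏' k : ℕ, ((1 - q ^ (2 * k + 1)) / (1 - q ^ (2 * k + 2))) ^ 2) = L^2 from htprod]
    have hcomp : Tendsto (fun x : ℝ => q * x) (nhdsWithin (1/q) (Set.Ico 0 (1/q)))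
        (nhdsWithin 1 (Set.Ico (0:ℝ) 1)) := by
      refine tendsto_nhdsWithin_of_tendsto_nhds_of_eventually_within _ ?_ ?_
      · have h3 : Tendsto (fun x : ℝ => q * x) (𝓝 (1/q)) (𝓝 (q * (1/q))) :=
          (continuous_const.mul continuous_id).tendsto _
        rw [mul_one_div, div_self hqne] at h3
        exact h3.mono_left nhdsWithin_le_nhds
      · refine Filter.eventually_of_mem self_mem_nhdsWithin fun x hx => ?_
        obtain ⟨hx0, hx1⟩ := hx
        refine ⟨by positivity, ?_⟩
        have h4 := mul_lt_mul_of_pos_left hx1 hq0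
        rwa [mul_one_div, div_self hqne] at h4
    have hmain : Tendsto (fun x : ℝ => ((1 - q*x) * ∑' n : ℕ, cc q n * (q*x)^n)^2)
        (nhdsWithin (1/q) (Set.Ico 0 (1/q))) (𝓝 (L^2)) := (hlim.comp hcomp).pow 2
    refine Filter.Tendsto.congr' ?_ hmain
    refine Filter.eventually_of_mem self_mem_nhdsWithin fun x hx => ?_
    obtain ⟨hx0, hx1⟩ := hx
    have hy0 : (0:ℝ) ≤ q*x := by positivity
    have hy1 : q*x < 1 := by
      have h4 := mul_lt_mul_of_pos_left hx1 hq0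
      rwa [mul_one_div, div_self hqne] at h4
    have htsum : ∑' k : ℕ, a k * x^k = (∑' n : ℕ, cc q n * (q*x)^n)^2 := by
      rw [← hcauchy (q*x) hy0 hy1]
      refine tsum_congr fun k => ?_
      rw [key k, mul_pow]
      ring
    show ((1 - q*x) * ∑' n : ℕ, cc q n * (q*x)^n)^2
        = (1 - q*x)^2 * ∑' k : ℕ, a k * x^k
    rw [htsum, mul_pow]
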